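/- Fix integers r, s ≥ 1 and t ≥ 2, and let P^t_{r,s} denote the number of t-cores in Par_{r,s}. Then P^t_{r,s} equals the coefficient of q^r in the polynomial ∏_{i=0}^{t−1} (1 + q + q^2 + ... + q^{n_i}). -/

import Mathlib

open Finset

/-- Partitions in the `r × s` rectangle: weakly decreasing `r`-tuples with parts at most `s`. -/
def IsRectPartition (r s : ℕ) (lam : Fin r → ℕ) : Prop :=
  (∀ i j : Fin r, i ≤ j → lam j ≤ lam i) ∧ ∀ i, lam i ≤ s

/-- The beta-set `β(λ) = {λ_i + r − i : 1 ≤ i ≤ r}` (with 0-indexed `i`). -/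
def betaSet (r : ℕ) (lam : Fin r → ℕ) : Finset ℕ :=
  Finset.image (fun i : Fin r => lam i + (r - 1 - (i : ℕ))) Finset.univ

/-- `λ` is a `t`-core: for every `b ∈ β(λ)` with `b ≥ t`, also `b − t ∈ β(λ)`. -/
def IsTCore (r t : ℕ) (lam : Fin r → ℕ) : Prop :=
  ∀ b ∈ betaSet r lam, t ≤ b → b - t ∈ betaSet r lam

/-- `n_i = ⌊(r+s+t−1−i)/t⌋`. -/
def nres (r s t i : ℕ) : ℕ := (r + s + t - 1 - i) / t

/-- `a_i(λ) = #{b ∈ β(λ) : b ≡ i (mod t)}`. -/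
def aCount (r t : ℕ) (lam : Fin r → ℕ) (i : ℕ) : ℕ :=
  ((betaSet r lam).filter fun b => b % t = i).card

/-- The justification `J(λ)`: in each residue class `i` mod `t`, the `a_i(λ)` smallest
nonnegative integers congruent to `i`. -/
def justification (r t : ℕ) (lam : Fin r → ℕ) : Finset ℕ :=
  (Finset.range t).biUnion fun i =>
    (Finset.range (aCount r t lam i)).image fun m => i + m * t

/-- The size of the `t`-core of `λ`: `Σ_{b ∈ J(λ)} b − r(r−1)/2`. -/
def coreSize (r t : ℕ) (lam : Fin r → ℕ) : ℕ :=
  (∑ b ∈ justification r t lam, b) - r * (r - 1) / 2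

/- ------------------ auxiliary lemmas ------------------ -/

lemma strictMono_add_le {n : ℕ} {f : Fin n → ℕ} (hf : StrictMono f) :
    ∀ (d : ℕ) (a b : Fin n), (b : ℕ) = (a : ℕ) + d → f a + d ≤ f b := by
  intro d
  induction d with
  | zero =>
    intro a b h
    have : a = b := Fin.ext (by omega)
    simp [this]
  | succ d ih =>
    intro a b h
    have hb' : (a : ℕ) + d < n := by have := b.isLt; omega
    have h1 := ih a ⟨(a : ℕ) + d, hb'⟩ rfl
    have h2 : f ⟨(a : ℕ) + d, hb'⟩ < f b := by
      apply hf
      rw [Fin.lt_def]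
      simpa using by omega
    omega

lemma lt_div_iff_aux (N t i : ℕ) (m : ℕ) (ht : 0 < t) (hi : i < t) :
    i + m * t < N ↔ m < (N + t - 1 - i) / t := by
  have h := Nat.le_div_iff_mul_le (k := t) (x := m + 1) (y := N + t - 1 - i) ht
  simp only [Nat.lt_iff_add_one_le]
  rw [h, add_mul, one_mul]
  generalize m * t = X
  omega

lemma filter_mod_range_eq (N t i : ℕ) (ht : 0 < t) (hi : i < t) :
    (Finset.range N).filter (fun b => b % t = i) =
      (Finset.range ((N + t - 1 - i) / t)).image (fun m => i + m * t) := by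
  ext b
  simp only [mem_filter, mem_range, mem_image]
  constructor
  · rintro ⟨hbN, hbi⟩
    refine ⟨b / t, ?_, ?_⟩
    · rw [← lt_div_iff_aux N t i (b / t) ht hi]
      have hrep : i + b / t * t = b := by rw [← hbi, Nat.mod_add_div']
      omega
    · rw [← hbi, Nat.mod_add_div']
  · rintro ⟨m, hm, rfl⟩
    refine ⟨(lt_div_iff_aux N t i m ht hi).2 hm, ?_⟩
    simp [Nat.add_mul_mod_self_right, Nat.mod_eq_of_lt hi]

lemma card_filter_mod_range (N t i : ℕ) (ht : 0 < t) (hi : i < t) :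
    ((Finset.range N).filter (fun b => b % t = i)).card = (N + t - 1 - i) / t := by
  rw [filter_mod_range_eq N t i ht hi,
    Finset.card_image_of_injective _
      (fun a b hab => Nat.eq_of_mul_eq_mul_right ht (Nat.add_left_cancel hab)),
    Finset.card_range]

lemma betaSet_strictAnti {r : ℕ} {lam : Fin r → ℕ}
    (hdec : ∀ i j : Fin r, i ≤ j → lam j ≤ lam i) :
    ∀ i j : Fin r, i < j → lam j + (r - 1 - (j : ℕ)) < lam i + (r - 1 - (i : ℕ)) := by
  intro i j hij
  have h1 := hdec i j (le_of_lt hij)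
  have h2 : (i : ℕ) < j := hij
  have h3 : (j : ℕ) < r := j.isLt
  omega

lemma card_betaSet {r : ℕ} {lam : Fin r → ℕ}
    (hdec : ∀ i j : Fin r, i ≤ j → lam j ≤ lam i) : (betaSet r lam).card = r := by
  rw [betaSet, Finset.card_image_of_injective _ ?_, card_univ, Fintype.card_fin]
  intro i j hij
  dsimp at hij
  rcases lt_trichotomy i j with h | h | h
  · have := betaSet_strictAnti hdec i j h; omega
  · exact h
  · have := betaSet_strictAnti hdec j i h; omega

lemma betaSet_subset_range {r s : ℕ} {lam : Fin r → ℕ}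
    (hle : ∀ i, lam i ≤ s) : betaSet r lam ⊆ Finset.range (r + s) := by
  intro b hb
  obtain ⟨i, -, rfl⟩ := Finset.mem_image.1 hb
  have h1 := hle i
  have h2 := i.isLt
  exact Finset.mem_range.2 (by omega)

lemma eq_of_betaSet_eq {r : ℕ} {lam mu : Fin r → ℕ}
    (hl : ∀ i j : Fin r, i ≤ j → lam j ≤ lam i)
    (hm : ∀ i j : Fin r, i ≤ j → mu j ≤ mu i)
    (h : betaSet r lam = betaSet r mu) : lam = mu := by
  have hcard : (betaSet r lam).card = r := card_betaSet hl
  have hmono1 : StrictMono (fun j : Fin r => lam j.rev + (r - 1 - (j.rev : ℕ))) := by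
    intro a b hab
    exact betaSet_strictAnti hl b.rev a.rev (Fin.rev_lt_rev.2 hab)
  have hmono2 : StrictMono (fun j : Fin r => mu j.rev + (r - 1 - (j.rev : ℕ))) := by
    intro a b hab
    exact betaSet_strictAnti hm b.rev a.rev (Fin.rev_lt_rev.2 hab)
  have h1 := Finset.orderEmbOfFin_unique hcard
    (f := fun j : Fin r => lam j.rev + (r - 1 - (j.rev : ℕ)))
    (fun x => Finset.mem_image_of_mem _ (mem_univ _)) hmono1
  have h2 := Finset.orderEmbOfFin_unique hcard
    (f := fun j : Fin r => mu j.rev + (r - 1 - (j.rev : ℕ)))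
    (fun x => by rw [h]; exact Finset.mem_image_of_mem _ (mem_univ _)) hmono2
  funext i
  have := congrFun (h1.trans h2.symm) i.rev
  simp only [Fin.rev_rev] at this
  omega

lemma downward_closed_eq_range (M : Finset ℕ) (hdc : ∀ m, m + 1 ∈ M → m ∈ M) :
    M = Finset.range M.card := by
  have hsub : ∀ x ∈ M, ∀ d, x - d ∈ M := by
    intro x hx d
    induction d with
    | zero => simpa using hx
    | succ d ih =>
      rcases Nat.eq_zero_or_pos (x - d) with h | h
      · have he : x - (d + 1) = x - d := by omega
        rw [he]; exact ih
      · have he : x - (d + 1) + 1 = x - d := by omega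
        exact hdc _ (by rw [he]; exact ih)
  have hlt : ∀ x ∈ M, x < M.card := by
    intro x hx
    have hss : Finset.range (x + 1) ⊆ M := by
      intro y hy
      have hy' : y ≤ x := by have := mem_range.1 hy; omega
      have := hsub x hx (x - y)
      rwa [Nat.sub_sub_self hy'] at this
    have := Finset.card_le_card hss
    simp only [Finset.card_range] at this
    omega
  refine Finset.eq_of_subset_of_card_le (fun x hx => mem_range.2 (hlt x hx)) ?_
  simp

lemma tcore_char {r t : ℕ} {lam : Fin r → ℕ} (ht : 0 < t)
    (hcore : IsTCore r t lam) {i : ℕ} (hi : i < t) (m : ℕ) :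
    i + m * t ∈ betaSet r lam ↔ m < aCount r t lam i := by
  classical
  set B := (betaSet r lam).filter (fun b => b % t = i) with hB
  set M := B.image (fun b => b / t) with hM
  have key : ∀ b ∈ B, i + b / t * t = b := by
    intro b hb
    obtain ⟨-, hbi⟩ := Finset.mem_filter.1 hb
    rw [← hbi, Nat.mod_add_div']
  have hMiff : ∀ m', m' ∈ M ↔ i + m' * t ∈ betaSet r lam := by
    intro m'
    constructor
    · intro hm'
      obtain ⟨b, hb, rfl⟩ := Finset.mem_image.1 hm'
      rw [key b hb]
      exact (Finset.mem_filter.1 hb).1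
    · intro hm'
      refine Finset.mem_image.2 ⟨i + m' * t, Finset.mem_filter.2 ⟨hm', ?_⟩, ?_⟩
      · simp [Nat.add_mul_mod_self_right, Nat.mod_eq_of_lt hi]
      · rw [Nat.add_mul_div_right _ _ ht, Nat.div_eq_of_lt hi, Nat.zero_add]
  have hdc : ∀ m', m' + 1 ∈ M → m' ∈ M := by
    intro m' hm'
    rw [hMiff] at hm' ⊢
    have hge : t ≤ i + (m' + 1) * t := by
      have : 1 * t ≤ (m' + 1) * t := Nat.mul_le_mul_right t (by omega)
      omega
    have hmem := hcore _ hm' hge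
    have heq : i + (m' + 1) * t - t = i + m' * t := by
      have : (m' + 1) * t = m' * t + t := by ring
      omega
    rwa [heq] at hmem
  have hMc : M = Finset.range M.card := downward_closed_eq_range M hdc
  have hcard : M.card = aCount r t lam i := by
    have h1 : M.card = B.card := by
      apply Finset.card_image_of_injOn
      intro b1 h1 b2 h2 hdiv
      have h1' := Finset.mem_coe.1 h1
      have h2' := Finset.mem_coe.1 h2
      dsimp only at hdiv
      rw [← key b1 h1', ← key b2 h2', hdiv]
    rw [h1, hB]
    rfl
  rw [← hMiff m, hMc, Finset.mem_range, hcard]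

/-- The number of `t`-cores in `Par_{r,s}` is the coefficient of `q^r` in
`∏_{i=0}^{t−1} (1 + q + ⋯ + q^{n_i})`. -/
theorem ncard_tcores_eq_coeff (r s t : ℕ) (hr : 1 ≤ r) (hs : 1 ≤ s) (ht : 2 ≤ t) :
    {lam : Fin r → ℕ | IsRectPartition r s lam ∧ IsTCore r t lam}.ncard =
      (∏ i ∈ Finset.range t,
        ∑ j ∈ Finset.range (nres r s t i + 1), (Polynomial.X : Polynomial ℕ) ^ j).coeff r := by
  classical
  have ht0 : 0 < t := by omega
  set S : Set (Fin r → ℕ) := {lam | IsRectPartition r s lam ∧ IsTCore r t lam} with hS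
  set F : Finset ((i : ℕ) → i ∈ Finset.range t → ℕ) :=
    ((Finset.range t).pi (fun i => Finset.range (nres r s t i + 1))).filter
      (fun g => ∑ i ∈ (Finset.range t).attach, g i.1 i.2 = r) with hF
  set Φ : (Fin r → ℕ) → ((i : ℕ) → i ∈ Finset.range t → ℕ) :=
    fun lam i _ => aCount r t lam i with hΦ
  -- RHS = F.card
  have hRHS : (∏ i ∈ Finset.range t,
      ∑ j ∈ Finset.range (nres r s t i + 1), (Polynomial.X : Polynomial ℕ) ^ j).coeff r
      = F.card := by
    rw [Finset.prod_sum]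
    have hcong : ∀ p ∈ (range t).pi (fun i => range (nres r s t i + 1)),
        (∏ x ∈ (range t).attach, (Polynomial.X : Polynomial ℕ) ^ p x.1 x.2)
          = Polynomial.X ^ (∑ x ∈ (range t).attach, p x.1 x.2) := by
      intro p _
      exact Finset.prod_pow_eq_pow_sum _ _ _
    rw [Finset.sum_congr rfl hcong, Polynomial.finset_sum_coeff, hF, Finset.card_filter]
    refine Finset.sum_congr rfl fun p _ => ?_
    rw [Polynomial.coeff_X_pow]
    simp [eq_comm]
  -- Φ maps S into F
  have hMaps : ∀ lam ∈ S, Φ lam ∈ (↑F : Set ((i : ℕ) → i ∈ Finset.range t → ℕ)) := by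
    intro lam hlam
    obtain ⟨⟨hdec, hle⟩, hcore⟩ := hlam
    simp only [hΦ, hF, Finset.mem_coe, Finset.mem_filter, Finset.mem_pi]
    constructor
    · intro i hi
      rw [Finset.mem_range]
      have hsub := betaSet_subset_range hle
      have hle2 := Finset.card_le_card
        (Finset.filter_subset_filter (fun b => b % t = i) hsub)
      rw [card_filter_mod_range (r + s) t i ht0 (mem_range.1 hi)] at hle2
      have : aCount r t lam i ≤ nres r s t i := hle2
      omega
    · rw [Finset.sum_attach (Finset.range t) (fun i => aCount r t lam i)]
      have hfib := Finset.card_eq_sum_card_fiberwise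
        (f := fun b => b % t) (s := betaSet r lam) (t := Finset.range t)
        (fun x _ => Finset.mem_range.2 (Nat.mod_lt x ht0))
      rw [card_betaSet hdec] at hfib
      exact hfib.symm
  -- Φ injective on S
  have hInj : Set.InjOn Φ S := by
    intro lam hlam mu hmu heq
    have hac : ∀ i, i < t → aCount r t lam i = aCount r t mu i := by
      intro i hi
      exact congrFun (congrFun heq i) (Finset.mem_range.2 hi)
    have hbeq : betaSet r lam = betaSet r mu := by
      ext b
      have h1 := tcore_char ht0 hlam.2 (Nat.mod_lt b ht0) (b / t)
      have h2 := tcore_char ht0 hmu.2 (Nat.mod_lt b ht0) (b / t)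
      rw [Nat.mod_add_div'] at h1 h2
      rw [h1, h2, hac _ (Nat.mod_lt b ht0)]
    exact eq_of_betaSet_eq hlam.1.1 hmu.1.1 hbeq
  -- Φ surjective onto F
  have hSurj : ∀ g ∈ (↑F : Set ((i : ℕ) → i ∈ Finset.range t → ℕ)), ∃ lam ∈ S, Φ lam = g := by
    intro g hg
    rw [Finset.mem_coe, hF, Finset.mem_filter, Finset.mem_pi] at hg
    obtain ⟨hgpi, hgsum⟩ := hg
    set a : ℕ → ℕ := fun i => if h : i < t then g i (Finset.mem_range.2 h) else 0 with ha
    set B : Finset ℕ :=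
      (Finset.range t).biUnion (fun i => (Finset.range (a i)).image (fun m => i + m * t))
      with hBdef
    have hmemB : ∀ i m, i < t → (i + m * t ∈ B ↔ m < a i) := by
      intro i m hi
      constructor
      · intro hb
        obtain ⟨i', hi', hb'⟩ := Finset.mem_biUnion.1 hb
        obtain ⟨m', hm', heq⟩ := Finset.mem_image.1 hb'
        have hi't : i' < t := Finset.mem_range.1 hi'
        have e1 : (i + m * t) % t = i := by
          simp [Nat.add_mul_mod_self_right, Nat.mod_eq_of_lt hi]
        have e2 : (i' + m' * t) % t = i' := by
          simp [Nat.add_mul_mod_self_right, Nat.mod_eq_of_lt hi't]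
        rw [heq] at e2
        have hii : i = i' := by omega
        subst hii
        have hmm : m' = m := Nat.eq_of_mul_eq_mul_right ht0 (Nat.add_left_cancel heq)
        rw [← hmm]
        exact Finset.mem_range.1 hm'
      · intro hm
        exact Finset.mem_biUnion.2 ⟨i, Finset.mem_range.2 hi,
          Finset.mem_image.2 ⟨m, Finset.mem_range.2 hm, rfl⟩⟩
    have hchar : ∀ b, b ∈ B ↔ b / t < a (b % t) := by
      intro b
      have h := hmemB (b % t) (b / t) (Nat.mod_lt b ht0)
      rwa [Nat.mod_add_div'] at h
    have hcardB : B.card = r := by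
      rw [hBdef, Finset.card_biUnion]
      · have hc : ∀ i ∈ Finset.range t,
            ((Finset.range (a i)).image (fun m => i + m * t)).card = a i := by
          intro i _
          rw [Finset.card_image_of_injective _
            (fun x y hxy => Nat.eq_of_mul_eq_mul_right ht0 (Nat.add_left_cancel hxy)),
            Finset.card_range]
        rw [Finset.sum_congr rfl hc, ← Finset.sum_attach (Finset.range t) a, ← hgsum]
        refine Finset.sum_congr rfl fun x _ => ?_
        rw [ha]
        exact dif_pos (Finset.mem_range.1 x.2)
      · intro x hx y hy hxy
        dsimp only [Function.onFun]
        rw [Finset.disjoint_left]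
        rintro b hb1 hb2
        obtain ⟨m1, -, hbe1⟩ := Finset.mem_image.1 hb1
        obtain ⟨m2, -, hbe2⟩ := Finset.mem_image.1 hb2
        apply hxy
        have e1 : (x + m1 * t) % t = x := by
          simp [Nat.add_mul_mod_self_right, Nat.mod_eq_of_lt (mem_range.1 hx)]
        have e2 : (y + m2 * t) % t = y := by
          simp [Nat.add_mul_mod_self_right, Nat.mod_eq_of_lt (mem_range.1 hy)]
        rw [hbe1] at e1
        rw [hbe2] at e2
        omega
    have hBsub : B ⊆ Finset.range (r + s) := by
      intro b hb
      obtain ⟨i, hi, hb'⟩ := Finset.mem_biUnion.1 hb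
      obtain ⟨m, hm, rfl⟩ := Finset.mem_image.1 hb'
      have hit := Finset.mem_range.1 hi
      have hmai : m < a i := Finset.mem_range.1 hm
      have hai : a i ≤ nres r s t i := by
        simp only [ha]
        rw [dif_pos hit]
        have := Finset.mem_range.1 (hgpi i (Finset.mem_range.2 hit))
        omega
      have hnres : nres r s t i = (r + s + t - 1 - i) / t := rfl
      exact Finset.mem_range.2 ((lt_div_iff_aux (r + s) t i m ht0 hit).2 (by omega))
    set e : Fin r ↪o ℕ := B.orderEmbOfFin hcardB with he
    have hemem : ∀ j, e j ∈ B := fun j => Finset.orderEmbOfFin_mem B hcardB j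
    have hemono : StrictMono e := e.strictMono
    have heself : ∀ j : Fin r, (j : ℕ) ≤ e j := by
      intro j
      have h0 : (0 : ℕ) < r := by omega
      have := strictMono_add_le hemono (j : ℕ) ⟨0, h0⟩ j (by simp)
      omega
    set lam : Fin r → ℕ := fun i => e i.rev - (r - 1 - (i : ℕ)) with hlamdef
    have hphi : ∀ i : Fin r, lam i + (r - 1 - (i : ℕ)) = e i.rev := by
      intro i
      have h1 := heself i.rev
      rw [Fin.val_rev] at h1
      have hi := i.isLt
      show e i.rev - (r - 1 - (i : ℕ)) + (r - 1 - (i : ℕ)) = e i.rev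
      omega
    have hdec : ∀ i j : Fin r, i ≤ j → lam j ≤ lam i := by
      intro i j hij
      rcases eq_or_lt_of_le hij with rfl | hlt
      · exact le_refl _
      · have hrevlt : j.rev < i.rev := Fin.rev_lt_rev.2 hlt
        have hd := strictMono_add_le hemono ((i.rev : ℕ) - (j.rev : ℕ)) j.rev i.rev
          (by omega)
        have h1 := hphi i
        have h2 := hphi j
        have hi := i.isLt
        have hj := j.isLt
        have hv1 := Fin.val_rev i
        have hv2 := Fin.val_rev j
        have hlt' : (i : ℕ) < j := hlt
        omega
    have h0r : (0 : ℕ) < r := by omega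
    have hle : ∀ i, lam i ≤ s := by
      intro i
      have h0 : lam i ≤ lam ⟨0, h0r⟩ := hdec ⟨0, h0r⟩ i (by
        rw [Fin.le_def]; simp)
      have h1 := hphi ⟨0, h0r⟩
      have h2 : e (⟨0, h0r⟩ : Fin r).rev ∈ Finset.range (r + s) := hBsub (hemem _)
      rw [Finset.mem_range] at h2
      have h3 : ((⟨0, h0r⟩ : Fin r) : ℕ) = 0 := rfl
      omega
    have hbeta : betaSet r lam = B := by
      ext b
      rw [betaSet]
      simp only [Finset.mem_image, Finset.mem_univ, true_and]
      constructor
      · rintro ⟨i, rfl⟩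
        rw [hphi i]
        exact hemem _
      · intro hb
        have hbr : b ∈ Set.range e := by
          rw [he, Finset.range_orderEmbOfFin]
          exact hb
        obtain ⟨j, rfl⟩ := hbr
        exact ⟨j.rev, by rw [hphi j.rev, Fin.rev_rev]⟩
    have hcore : IsTCore r t lam := by
      intro b hb htb
      rw [hbeta] at hb ⊢
      rw [hchar] at hb
      have hq : 1 ≤ b / t := (Nat.one_le_div_iff ht0).2 htb
      obtain ⟨q, hq'⟩ : ∃ q, b / t = q + 1 := ⟨b / t - 1, by omega⟩
      have hbeq : b % t + q * t = b - t := by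
        have hmd := Nat.mod_add_div' b t
        rw [hq'] at hmd
        have ht2 : (q + 1) * t = q * t + t := by ring
        omega
      rw [← hbeq]
      have hbmod : b % t + q * t = b % t + q * t := rfl
      refine (hmemB _ q (Nat.mod_lt b ht0)).2 ?_
      rw [hq'] at hb
      omega
    have hacount : ∀ i, i < t → aCount r t lam i = a i := by
      intro i hi
      have hfe : (betaSet r lam).filter (fun b => b % t = i)
          = (Finset.range (a i)).image (fun m => i + m * t) := by
        rw [hbeta]
        ext b
        simp only [Finset.mem_filter, Finset.mem_image, Finset.mem_range]
        constructor
        · rintro ⟨hbB, hbi⟩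
          refine ⟨b / t, ?_, ?_⟩
          · rw [hchar] at hbB; rwa [hbi] at hbB
          · rw [← hbi, Nat.mod_add_div']
        · rintro ⟨m, hm, rfl⟩
          refine ⟨(hmemB i m hi).2 hm, ?_⟩
          simp [Nat.add_mul_mod_self_right, Nat.mod_eq_of_lt hi]
      unfold aCount
      rw [hfe, Finset.card_image_of_injective _
        (fun x y hxy => Nat.eq_of_mul_eq_mul_right ht0 (Nat.add_left_cancel hxy)),
        Finset.card_range]
    refine ⟨lam, ⟨⟨hdec, hle⟩, hcore⟩, ?_⟩
    funext i hi
    have hit := Finset.mem_range.1 hi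
    show aCount r t lam i = g i hi
    rw [hacount i hit, ha]
    exact dif_pos hit
  have himage : Φ '' S = ↑F := by
    apply Set.Subset.antisymm
    · rintro _ ⟨lam, hlam, rfl⟩
      exact hMaps lam hlam
    · intro g hg
      obtain ⟨lam, hlam, hlg⟩ := hSurj g hg
      exact ⟨lam, hlam, hlg⟩
  rw [hRHS]
  calc S.ncard = (Φ '' S).ncard := (Set.ncard_image_of_injOn hInj).symm
    _ = (↑F : Set ((i : ℕ) → i ∈ Finset.range t → ℕ)).ncard := by rw [himage]
    _ = F.card := Set.ncard_coe_finset F
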